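/- For every tournament T, the tournament hypergraph H(T), whose vertices are those of T and whose edges are the vertex sets of cyclically oriented triangles of T, contains no copy of K_4^{(3)-} (four vertices carrying three edges). -/
import Mathlib


/-- `s` is an edge of the tournament hypergraph of the tournament `r`, i.e. the vertex
set of a cyclically oriented triangle. -/
def CyclicTriangle {α : Type*} [DecidableEq α] (r : α → α → Prop) (s : Finset α) : Prop :=
  ∃ u v w : α, s = {u, v, w} ∧ r u v ∧ r v w ∧ r w u

set_option maxHeartbeats 4000000 in
set_option maxRecDepth 10000 in
lemma finset_labeling : ∀ s0 s1 s2 : Finset (Fin 4),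
    (s0 ≠ s1 ∧ s0 ≠ s2 ∧ s1 ≠ s2 ∧ s0.card = 3 ∧ s1.card = 3 ∧ s2.card = 3) →
  ∃ a b c d : Fin 4, a ≠ b ∧ a ≠ c ∧ a ≠ d ∧ b ≠ c ∧ b ≠ d ∧ c ≠ d ∧
    (s0 = {a,b,c} ∧ s1 = {a,b,d} ∧ (s2 = {a,c,d} ∨ s2 = {b,c,d})) := by decide

lemma cyc_cases {α : Type*} [DecidableEq α] {r : α → α → Prop} {A B C : α}
    (hAB : A ≠ B) (hAC : A ≠ C) (hBC : B ≠ C)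
    (h : CyclicTriangle r {A, B, C}) :
    (r A B ∧ r B C ∧ r C A) ∨ (r A C ∧ r C B ∧ r B A) := by
  obtain ⟨u, v, w, hs, h1, h2, h3⟩ := h
  have card3 : ({A, B, C} : Finset α).card = 3 := by
    rw [Finset.card_insert_of_notMem (by simp [hAB, hAC]),
      Finset.card_insert_of_notMem (by simp [hBC]), Finset.card_singleton]
  have h3c : ({u, v, w} : Finset α).card = 3 := hs ▸ card3
  have two : ∀ p q : α, ({p, q} : Finset α).card ≤ 2 :=
    fun p q => (Finset.card_insert_le _ _).trans (by simp)
  have huv : u ≠ v := by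
    rintro rfl
    have hsub : ({u, u, w} : Finset α) ⊆ {u, w} := by intro z; simp; try tauto
    have := (Finset.card_le_card hsub).trans (two u w); omega
  have huw : u ≠ w := by
    rintro rfl
    have hsub : ({u, v, u} : Finset α) ⊆ {u, v} := by intro z; simp; try tauto
    have := (Finset.card_le_card hsub).trans (two u v); omega
  have hvw : v ≠ w := by
    rintro rfl
    have hsub : ({u, v, v} : Finset α) ⊆ {u, v} := by intro z; simp; try tauto
    have := (Finset.card_le_card hsub).trans (two u v); omega
  have hu : u = A ∨ u = B ∨ u = C := by
    have : u ∈ ({u, v, w} : Finset α) := by simp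
    rw [← hs] at this; simpa using this
  have hv : v = A ∨ v = B ∨ v = C := by
    have : v ∈ ({u, v, w} : Finset α) := by simp
    rw [← hs] at this; simpa using this
  have hw : w = A ∨ w = B ∨ w = C := by
    have : w ∈ ({u, v, w} : Finset α) := by simp
    rw [← hs] at this; simpa using this
  rcases hu with rfl | rfl | rfl <;> rcases hv with rfl | rfl | rfl <;>
    rcases hw with rfl | rfl | rfl <;>
      first
        | exact absurd rfl huv
        | exact absurd rfl huw
        | exact absurd rfl hvw
        | exact Or.inl ⟨h1, h2, h3⟩
        | exact Or.inl ⟨h3, h1, h2⟩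
        | exact Or.inl ⟨h2, h3, h1⟩
        | exact Or.inr ⟨h1, h2, h3⟩
        | exact Or.inr ⟨h3, h1, h2⟩
        | exact Or.inr ⟨h2, h3, h1⟩

set_option maxHeartbeats 4000000 in
/-- Tournament hypergraphs contain no copy of `K₄^(3)-`: there are no four distinct
vertices carrying three distinct edges. -/
theorem tournament_hypergraph_K43minus_free {α : Type*} [DecidableEq α]
    (r : α → α → Prop) (htournament : ∀ x y : α, x ≠ y → (r x y ↔ ¬ r y x)) :
    ¬ ∃ (x : Fin 4 → α) (S : Fin 3 → Finset (Fin 4)),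
      Function.Injective x ∧ Function.Injective S ∧ (∀ t, (S t).card = 3) ∧
      (∀ t, CyclicTriangle r ((S t).image x)) := by
  rintro ⟨x, S, hxinj, hSinj, hcard, hcyc⟩
  have hne01 : S 0 ≠ S 1 := fun h => absurd (hSinj h) (by decide)
  have hne02 : S 0 ≠ S 2 := fun h => absurd (hSinj h) (by decide)
  have hne12 : S 1 ≠ S 2 := fun h => absurd (hSinj h) (by decide)
  obtain ⟨a, b, c, d, hab, hac, had, hbc, hbd, hcd, h0, h1, h2⟩ :=
    finset_labeling (S 0) (S 1) (S 2) ⟨hne01, hne02, hne12, hcard 0, hcard 1, hcard 2⟩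
  have himg : ∀ (t : Fin 3) (p q s : Fin 4), S t = {p, q, s} →
      (S t).image x = {x p, x q, x s} := by
    intro t p q s h; rw [h]; simp
  -- distinctness of images
  have hAB := hxinj.ne hab
  have hAC := hxinj.ne hac
  have hAD := hxinj.ne had
  have hBC := hxinj.ne hbc
  have hBD := hxinj.ne hbd
  have hCD := hxinj.ne hcd
  -- tournament facts
  have tAB := htournament _ _ hAB
  have tAC := htournament _ _ hAC
  have tAD := htournament _ _ hAD
  have tBC := htournament _ _ hBC
  have tBD := htournament _ _ hBD
  have tCD := htournament _ _ hCD
  have nAB : ¬ (r (x a) (x b) ∧ r (x b) (x a)) := fun ⟨u1, u2⟩ => (tAB.mp u1) u2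
  have nAC : ¬ (r (x a) (x c) ∧ r (x c) (x a)) := fun ⟨u1, u2⟩ => (tAC.mp u1) u2
  have nAD : ¬ (r (x a) (x d) ∧ r (x d) (x a)) := fun ⟨u1, u2⟩ => (tAD.mp u1) u2
  have nBC : ¬ (r (x b) (x c) ∧ r (x c) (x b)) := fun ⟨u1, u2⟩ => (tBC.mp u1) u2
  have nBD : ¬ (r (x b) (x d) ∧ r (x d) (x b)) := fun ⟨u1, u2⟩ => (tBD.mp u1) u2
  have cyc0 : CyclicTriangle r {x a, x b, x c} := by
    have := hcyc 0; rwa [himg 0 a b c h0] at this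
  have cyc1 : CyclicTriangle r {x a, x b, x d} := by
    have := hcyc 1; rwa [himg 1 a b d h1] at this
  have c0 := cyc_cases hAB hAC hBC cyc0
  have c1 := cyc_cases hAB hAD hBD cyc1
  rcases h2 with h2 | h2
  · have cyc2 : CyclicTriangle r {x a, x c, x d} := by
      have := hcyc 2; rwa [himg 2 a c d h2] at this
    have c2 := cyc_cases hAC hAD hCD cyc2
    rcases c0 with ⟨p1, p2, p3⟩ | ⟨p1, p2, p3⟩ <;> rcases c1 with ⟨q1, q2, q3⟩ | ⟨q1, q2, q3⟩ <;>
      rcases c2 with ⟨s1, s2, s3⟩ | ⟨s1, s2, s3⟩ <;>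
      first
        | exact nAB ⟨p1, q3⟩
        | exact nAB ⟨q1, p3⟩
        | exact nAC ⟨s1, p3⟩
        | exact nAC ⟨p1, s3⟩
        | exact nAD ⟨s1, q3⟩
        | exact nAD ⟨q1, s3⟩
  · have cyc2 : CyclicTriangle r {x b, x c, x d} := by
      have := hcyc 2; rwa [himg 2 b c d h2] at this
    have c2 := cyc_cases hBC hBD hCD cyc2
    rcases c0 with ⟨p1, p2, p3⟩ | ⟨p1, p2, p3⟩ <;> rcases c1 with ⟨q1, q2, q3⟩ | ⟨q1, q2, q3⟩ <;>
      rcases c2 with ⟨s1, s2, s3⟩ | ⟨s1, s2, s3⟩ <;>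
      first
        | exact nAB ⟨p1, q3⟩
        | exact nAB ⟨q1, p3⟩
        | exact nBC ⟨p2, s3⟩
        | exact nBC ⟨s1, p2⟩
        | exact nBD ⟨q2, s3⟩
        | exact nBD ⟨s1, q2⟩
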